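/- Let σ₁ = (1 2)(3 4 5 6 ⋯ j+2) and σ₂ = (1 2)(5 4 3 6 ⋯ j+2) in S_{j+2}, where j > 3 is odd. Then (σ₁σ₂)² ≠ (σ₂σ₁)². -/

import Mathlib

lemma cval (j i : ℕ) (h : i < j) :
    (List.range' 3 j).formPerm (3 + i) = 3 + ((i + 1) % j) := by
  have hn : (List.range' 3 j).Nodup := List.nodup_range' (s := 3) (n := j) 1 Nat.one_pos
  have := List.formPerm_apply_getElem (List.range' 3 j) hn i (by simpa using h)
  simpa using this

/-- For `j > 3` odd, `σ₁ = (1 2)(3 4 5 ⋯ j+2)` and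
`σ₂ = (3 5) σ₁ (3 5)⁻¹ = (1 2)(5 4 3 6 ⋯ j+2)` satisfy `(σ₁σ₂)² ≠ (σ₂σ₁)²`. -/
theorem stmt13 (j : ℕ) (hj : 3 < j) (hodd : Odd j) :
    let σ₁ : Equiv.Perm ℕ := Equiv.swap 1 2 * (List.range' 3 j).formPerm
    let σ₂ : Equiv.Perm ℕ := Equiv.swap 3 5 * σ₁ * (Equiv.swap 3 5)⁻¹
    (σ₁ * σ₂) ^ 2 ≠ (σ₂ * σ₁) ^ 2 := by
  intro σ₁ σ₂ heq
  have hj5 : 5 ≤ j := by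
    rcases hodd with ⟨k, rfl⟩; omega
  -- cycle values
  set c := (List.range' 3 j).formPerm with hc
  have c3 : c 3 = 4 := by have := cval j 0 (by omega); simpa [Nat.mod_eq_of_lt (show 1 < j by omega)] using this
  have c4 : c 4 = 5 := by have := cval j 1 (by omega); simpa [Nat.mod_eq_of_lt (show 2 < j by omega)] using this
  have c5 : c 5 = 6 := by have := cval j 2 (by omega); simpa [Nat.mod_eq_of_lt (show 3 < j by omega)] using this
  have c6 : c 6 = 7 := by have := cval j 3 (by omega); simpa [Nat.mod_eq_of_lt (show 4 < j by omega)] using this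
  have s12 : ∀ x, 3 ≤ x → Equiv.swap 1 2 x = x := fun x hx =>
    Equiv.swap_apply_of_ne_of_ne (by omega) (by omega)
  have hσ₁ : ∀ x y, 3 ≤ y → c x = y → σ₁ x = y := by
    intro x y hy hxy
    show Equiv.swap 1 2 (c x) = y
    rw [hxy, s12 y hy]
  have hσ₂ : ∀ x y, 3 ≤ y → c (Equiv.swap 3 5 x) = y → σ₂ x = Equiv.swap 3 5 y := by
    intro x y hy hxy
    show Equiv.swap 3 5 (Equiv.swap 1 2 (c (Equiv.swap 3 5 x))) = _
    rw [hxy, s12 y hy]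
  -- evaluate both sides at 3
  have key := congrArg (fun p : Equiv.Perm ℕ => p 3) heq
  simp only [pow_two, Equiv.Perm.mul_apply] at key
  -- rhs: σ₂ (σ₁ (σ₂ (σ₁ 3)))
  have r1 : σ₁ 3 = 4 := hσ₁ 3 4 (by omega) c3
  have r2 : σ₂ 4 = 3 := by
    have := hσ₂ 4 5 (by omega) (by rw [Equiv.swap_apply_of_ne_of_ne (by omega) (by omega)]; exact c4)
    simpa [Equiv.swap_apply_right] using this
  -- lhs: σ₁ (σ₂ (σ₁ (σ₂ 3)))
  have l1 : σ₂ 3 = 6 := by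
    have := hσ₂ 3 6 (by omega) (by rw [Equiv.swap_apply_left]; exact c5)
    simpa [Equiv.swap_apply_of_ne_of_ne (show (6:ℕ) ≠ 3 by omega) (show (6:ℕ) ≠ 5 by omega)] using this
  have l2 : σ₁ 6 = 7 := hσ₁ 6 7 (by omega) c6
  rw [l1, l2, r1, r2, r1, r2] at key
  -- now key : σ₁ (σ₂ 7) = 3
  rcases eq_or_lt_of_le hj5 with h5 | h7
  · -- j = 5 : c 7 = 3, σ₂ 7 = 5, σ₁ 5 = 6
    subst h5
    have c7 : c 7 = 3 := by
      have := cval 5 4 (by omega); simpa using this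
    have l3 : σ₂ 7 = 5 := by
      have := hσ₂ 7 3 (by omega) (by rw [Equiv.swap_apply_of_ne_of_ne (by omega) (by omega)]; exact c7)
      simpa [Equiv.swap_apply_left] using this
    have l4 : σ₁ 5 = 6 := hσ₁ 5 6 (by omega) c5
    rw [l3, l4] at key
    omega
  · -- j ≥ 7 : c 7 = 8, σ₂ 7 = 8, σ₁ 8 = 9
    have hj7 : 7 ≤ j := by rcases hodd with ⟨k, hk⟩; omega
    have c7 : c 7 = 8 := by
      have := cval j 4 (by omega); simpa [Nat.mod_eq_of_lt (show 5 < j by omega)] using this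
    have c8 : c 8 = 9 := by
      have := cval j 5 (by omega); simpa [Nat.mod_eq_of_lt (show 6 < j by omega)] using this
    have l3 : σ₂ 7 = 8 := by
      have := hσ₂ 7 8 (by omega) (by rw [Equiv.swap_apply_of_ne_of_ne (by omega) (by omega)]; exact c7)
      simpa [Equiv.swap_apply_of_ne_of_ne (show (8:ℕ) ≠ 3 by omega) (show (8:ℕ) ≠ 5 by omega)] using this
    have l4 : σ₁ 8 = 9 := hσ₁ 8 9 (by omega) c8
    rw [l3, l4] at key
    omega
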